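/- Let X be a uniformly convex real Banach space, C a nonempty closed convex subset of X, and T : C → C a Chatterjea mapping satisfying: (H1) for every x ∈ C and every integer k ≥ 2 the sequence n ↦ ‖T^{n+k}x − Tⁿx‖ is decreasing; (H2) there exist an integer k₀ ≥ 1 and a constant M such that ‖Tⁿx − Tⁿy‖ ≤ M‖x − y‖ for all n ≥ k₀ and all x, y ∈ C. Then the following are equivalent: (i) 0 ∈ closure(R(I − T)) and 0 ∉ R(I − T); (ii) for every x ∈ C, ‖Tⁿx‖ → ∞ and ‖Tⁿx‖/n → 0 as n → ∞. -/

import Mathlib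

set_option linter.unusedSectionVars false
set_option maxHeartbeats 1000000

open Filter Topology

section ChatterjeaAux

variable {X : Type*} [NormedAddCommGroup X] [NormedSpace ℝ X]

/-- Scaled uniform convexity. -/
lemma chat_uc_scaled [UniformConvexSpace X] {ε : ℝ} (hε : 0 < ε) :
    ∃ δ > 0, ∀ (R : ℝ), 0 < R → ∀ x y : X, ‖x‖ ≤ R → ‖y‖ ≤ R → ε * R ≤ ‖x - y‖ →
      ‖x + y‖ ≤ (2 - δ) * R := by
  obtain ⟨δ, hδ, h⟩ := exists_forall_closed_ball_dist_add_le_two_sub X hε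
  refine ⟨δ, hδ, fun R hR x y hx hy hxy => ?_⟩
  have hx' : ‖R⁻¹ • x‖ ≤ 1 := by
    rw [norm_smul, Real.norm_eq_abs, abs_of_pos (inv_pos.2 hR)]
    rw [inv_mul_le_iff₀ hR, mul_one]; exact hx
  have hy' : ‖R⁻¹ • y‖ ≤ 1 := by
    rw [norm_smul, Real.norm_eq_abs, abs_of_pos (inv_pos.2 hR)]
    rw [inv_mul_le_iff₀ hR, mul_one]; exact hy
  have hxy' : ε ≤ ‖R⁻¹ • x - R⁻¹ • y‖ := by
    rw [← smul_sub, norm_smul, Real.norm_eq_abs, abs_of_pos (inv_pos.2 hR)]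
    rw [le_inv_mul_iff₀ hR, mul_comm]; exact hxy
  have := h hx' hy' hxy'
  rw [← smul_add, norm_smul, Real.norm_eq_abs, abs_of_pos (inv_pos.2 hR),
    inv_mul_le_iff₀ hR] at this
  linarith [this]

/-- Uniform convexity limit lemma. -/
lemma chat_uc_tendsto_sub [UniformConvexSpace X] {a b : ℕ → X} {d : ℝ} (hd : 0 < d)
    (ha : Tendsto (fun n => ‖a n‖) atTop (𝓝 d))
    (hb : Tendsto (fun n => ‖b n‖) atTop (𝓝 d))
    (hab : ∀ n, 2 * d ≤ ‖a n + b n‖) :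
    Tendsto (fun n => a n - b n) atTop (𝓝 0) := by
  rw [NormedAddCommGroup.tendsto_nhds_zero]
  intro ε hε
  by_contra hcon
  rw [Filter.not_eventually] at hcon
  have hcon' : ∃ᶠ n in atTop, ε ≤ ‖a n - b n‖ := hcon.mono fun n hn => not_lt.1 hn
  obtain ⟨δ₀, hδ₀, huc⟩ := chat_uc_scaled (X := X) (ε := ε / (2 * d))
    (div_pos hε (by linarith))
  set δ := min δ₀ 1 with hδdef
  have hδ : 0 < δ := lt_min hδ₀ one_pos
  have hδle : δ ≤ δ₀ := min_le_left _ _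
  have hδ1 : δ ≤ 1 := min_le_right _ _
  set η := δ * d / 4 with hη
  have hηpos : 0 < η := by positivity
  have hev : ∀ᶠ n in atTop, ‖a n‖ ≤ d + η ∧ ‖b n‖ ≤ d + η := by
    filter_upwards [ha.eventually (eventually_le_nhds (show d < d + η by linarith)),
      hb.eventually (eventually_le_nhds (show d < d + η by linarith))] with n h1 h2
    exact ⟨h1, h2⟩
  obtain ⟨n, hn1, hn2⟩ := (hcon'.and_eventually hev).exists
  obtain ⟨hna, hnb⟩ := hn2
  have hR : (0:ℝ) < d + η := by linarith
  have hεR : ε / (2 * d) * (d + η) ≤ ‖a n - b n‖ := by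
    have : ε / (2 * d) * (d + η) ≤ ε := by
      rw [div_mul_eq_mul_div, div_le_iff₀ (by linarith)]
      have : η ≤ d := by nlinarith
      nlinarith
    linarith
  have := huc (d + η) hR (a n) (b n) hna hnb hεR
  have h2d := hab n
  have hlt : (2 - δ₀) * (d + η) ≤ (2 - δ) * (d + η) := by nlinarith
  have : (2 - δ) * (d + η) < 2 * d := by
    rw [hη]; nlinarith
  linarith

variable {C : Set X} {T : X → X}

/-- Chatterjea key inequality along the orbit. -/
lemma chat_defect_half (hT : Set.MapsTo T C C)
    (hchat : ∀ x ∈ C, ∀ y ∈ C, ‖T x - T y‖ ≤ (1 / 2) * (‖T x - y‖ + ‖T y - x‖))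
    {x : X} (hx : x ∈ C) (n : ℕ) :
    ‖T^[n + 2] x - T^[n + 1] x‖ ≤ (1 / 2) * ‖T^[n + 2] x - T^[n] x‖ := by
  have ha : T^[n] x ∈ C := hT.iterate n hx
  have hb : T^[n + 1] x ∈ C := hT.iterate (n + 1) hx
  have h := hchat _ ha _ hb
  have e1 : T (T^[n] x) = T^[n + 1] x := (Function.iterate_succ_apply' T n x).symm
  have e2 : T (T^[n + 1] x) = T^[n + 2] x := (Function.iterate_succ_apply' T (n + 1) x).symm
  rw [e1, e2, sub_self, norm_zero] at h
  have e3 : ‖T^[n + 1] x - T^[n + 2] x‖ = ‖T^[n + 2] x - T^[n + 1] x‖ := norm_sub_rev _ _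
  rw [e3] at h
  linarith

/-- The defect sequence is antitone. -/
lemma chat_defect_antitone (hT : Set.MapsTo T C C)
    (hchat : ∀ x ∈ C, ∀ y ∈ C, ‖T x - T y‖ ≤ (1 / 2) * (‖T x - y‖ + ‖T y - x‖))
    {x : X} (hx : x ∈ C) :
    Antitone fun n : ℕ => ‖T^[n + 1] x - T^[n] x‖ := by
  refine antitone_nat_of_succ_le fun n => ?_
  have h := chat_defect_half hT hchat hx n
  have tri : ‖T^[n + 2] x - T^[n] x‖ ≤ ‖T^[n + 2] x - T^[n + 1] x‖ + ‖T^[n + 1] x - T^[n] x‖ :=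
    norm_sub_le_norm_sub_add_norm_sub _ _ _
  show ‖T^[n + 1 + 1] x - T^[n + 1] x‖ ≤ ‖T^[n + 1] x - T^[n] x‖
  have e : n + 1 + 1 = n + 2 := rfl
  rw [e]
  linarith

/-- Orbit telescoping bound. -/
lemma chat_telescope (hT : Set.MapsTo T C C)
    (hchat : ∀ x ∈ C, ∀ y ∈ C, ‖T x - T y‖ ≤ (1 / 2) * (‖T x - y‖ + ‖T y - x‖))
    {y : X} (hy : y ∈ C) : ∀ n : ℕ, ‖T^[n] y - y‖ ≤ n * ‖T y - y‖ := by
  intro n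
  induction n with
  | zero => simp
  | succ n ih =>
      have h1 : ‖T^[n + 1] y - y‖ ≤ ‖T^[n + 1] y - T^[n] y‖ + ‖T^[n] y - y‖ :=
        norm_sub_le_norm_sub_add_norm_sub _ _ _
      have h2 : ‖T^[n + 1] y - T^[n] y‖ ≤ ‖T^[0 + 1] y - T^[0] y‖ :=
        chat_defect_antitone hT hchat hy (Nat.zero_le n)
      simp only [Nat.zero_add, Function.iterate_one, Function.iterate_zero, id_eq] at h2
      have e : ((n + 1 : ℕ) : ℝ) * ‖T y - y‖ = n * ‖T y - y‖ + ‖T y - y‖ := by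
        push_cast; ring
      rw [e]
      linarith

/-- Asymptotic regularity from sublinear growth. -/
lemma chat_defect_tendsto_zero [UniformConvexSpace X] (hT : Set.MapsTo T C C)
    (hchat : ∀ x ∈ C, ∀ y ∈ C, ‖T x - T y‖ ≤ (1 / 2) * (‖T x - y‖ + ‖T y - x‖))
    (hH1 : ∀ x ∈ C, ∀ k : ℕ, 2 ≤ k → Antitone fun n : ℕ => ‖T^[n + k] x - T^[n] x‖)
    {x : X} (hx : x ∈ C)
    (hsub : Filter.Tendsto (fun n : ℕ => ‖T^[n] x‖ / n) Filter.atTop (nhds 0)) :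
    Filter.Tendsto (fun n : ℕ => ‖T^[n + 1] x - T^[n] x‖) Filter.atTop (nhds 0) := by
  have chat_defect_half' : ∀ n : ℕ,
      ‖T^[n + 2] x - T^[n + 1] x‖ ≤ (1 / 2) * ‖T^[n + 2] x - T^[n] x‖ :=
    chat_defect_half hT hchat hx
  have defect_antitone : Antitone fun n : ℕ => ‖T^[n + 1] x - T^[n] x‖ :=
    chat_defect_antitone hT hchat hx
  set u : ℕ → X := fun n => T^[n + 1] x - T^[n] x with hu
  set dn : ℕ → ℝ := fun n => ‖u n‖ with hdn
  have hbdd : BddBelow (Set.range dn) := ⟨0, by rintro r ⟨n, rfl⟩; exact norm_nonneg _⟩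
  set d := ⨅ n, dn n with hd
  have htend : Tendsto dn atTop (𝓝 d) := tendsto_atTop_ciInf defect_antitone hbdd
  have hd0 : 0 ≤ d := le_ciInf fun n => norm_nonneg _
  rcases hd0.lt_or_eq with hdpos | hdzero
  · exfalso
    have hdle : ∀ n, d ≤ dn n := fun n => ciInf_le hbdd n
    have sumlem : ∀ k n : ℕ, T^[n + k] x - T^[n] x = ∑ i ∈ Finset.range k, u (n + i) := by
      intro k
      induction k with
      | zero => intro n; simp
      | succ k ih =>
          intro n
          rw [Finset.sum_range_succ, ← ih n]
          have e : n + (k + 1) = (n + k) + 1 := by ring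
          rw [e]
          show T^[(n + k) + 1] x - T^[n] x
            = (T^[n + k] x - T^[n] x) + (T^[(n + k) + 1] x - T^[n + k] x)
          abel
    have consec : Tendsto (fun n => u (n + 1) - u n) atTop (𝓝 0) := by
      apply chat_uc_tendsto_sub hdpos (a := fun n => u (n + 1)) (b := u)
      · exact htend.comp (tendsto_add_atTop_nat 1)
      · exact htend
      · intro n
        have h1 := chat_defect_half' n
        have h2 : d ≤ ‖T^[n + 2] x - T^[n + 1] x‖ := by
          have := hdle (n + 1)
          simpa [hdn, hu, show n + 1 + 1 = n + 2 from rfl] using this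
        have e : u (n + 1) + u n = T^[n + 2] x - T^[n] x := by
          simp only [hu, show n + 1 + 1 = n + 2 from rfl]
          abel
        rw [e]
        linarith
    have key : ∀ i : ℕ, Tendsto (fun n => u (n + i) - u n) atTop (𝓝 0) := by
      intro i
      induction i with
      | zero => simpa using tendsto_const_nhds
      | succ i ih =>
          have h1 : Tendsto (fun n => u (n + 1 + i) - u (n + 1)) atTop (𝓝 0) :=
            ih.comp (tendsto_add_atTop_nat 1)
          have e : (fun n => u (n + (i + 1)) - u n)
              = fun n => (u (n + 1 + i) - u (n + 1)) + (u (n + 1) - u n) := by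
            funext n
            rw [show n + 1 + i = n + (i + 1) from by ring]
            abel
          rw [e]
          simpa using h1.add consec
    have approx : ∀ k : ℕ,
        Tendsto (fun n => (T^[n + k] x - T^[n] x) - (k : ℝ) • u n) atTop (𝓝 0) := by
      intro k
      have e : (fun n => (T^[n + k] x - T^[n] x) - (k : ℝ) • u n)
          = fun n => ∑ i ∈ Finset.range k, (u (n + i) - u n) := by
        funext n
        rw [Finset.sum_sub_distrib, ← sumlem k n]
        congr 1
        rw [Finset.sum_const, Finset.card_range]
        rw [Nat.cast_smul_eq_nsmul]
      rw [e]
      have := tendsto_finset_sum (Finset.range k) (fun i (_ : i ∈ Finset.range k) => key i)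
      simpa using this
    have kbound : ∀ k : ℕ, 2 ≤ k → (k : ℝ) * d - 1 ≤ ‖T^[k] x‖ + ‖x‖ := by
      intro k hk
      have h1 : Tendsto (fun n => (k : ℝ) * dn n - ‖(T^[n + k] x - T^[n] x) - (k : ℝ) • u n‖)
          atTop (𝓝 ((k : ℝ) * d - 0)) := by
        apply Tendsto.sub (htend.const_mul _)
        exact tendsto_zero_iff_norm_tendsto_zero.1 (approx k)
      have h2 : ∀ᶠ n in atTop,
          (k : ℝ) * d - 1 < (k : ℝ) * dn n - ‖(T^[n + k] x - T^[n] x) - (k : ℝ) • u n‖ := by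
        apply h1.eventually_const_lt
        linarith
      obtain ⟨n, hn⟩ := h2.exists
      have h3 : (k : ℝ) * dn n - ‖(T^[n + k] x - T^[n] x) - (k : ℝ) • u n‖
          ≤ ‖T^[n + k] x - T^[n] x‖ := by
        have := norm_sub_norm_le ((k : ℝ) • u n) (T^[n + k] x - T^[n] x)
        rw [norm_smul, Real.norm_natCast] at this
        rw [norm_sub_rev ((k : ℝ) • u n)] at this
        linarith
      have h4 : ‖T^[n + k] x - T^[n] x‖ ≤ ‖T^[k] x - x‖ := by
        have := hH1 x hx k hk (Nat.zero_le n)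
        simpa using this
      have h5 : ‖T^[k] x - x‖ ≤ ‖T^[k] x‖ + ‖x‖ := norm_sub_le _ _
      linarith
    have hfin : ∀ᶠ k : ℕ in atTop, d ≤ ‖T^[k] x‖ / k + (1 + ‖x‖) / k := by
      filter_upwards [eventually_ge_atTop 2] with k hk
      have hkpos : (0 : ℝ) < (k : ℝ) := by
        have : 0 < k := by omega
        exact_mod_cast this
      have hb := kbound k hk
      have : d ≤ (‖T^[k] x‖ + (1 + ‖x‖)) / k := by
        rw [le_div_iff₀ hkpos]
        linarith
      rw [add_div] at this
      exact this
    have htoz : Tendsto (fun k : ℕ => ‖T^[k] x‖ / k + (1 + ‖x‖) / k) atTop (𝓝 0) := by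
      have h2 : Tendsto (fun k : ℕ => (1 + ‖x‖) / k) atTop (𝓝 0) :=
        tendsto_const_div_atTop_nhds_zero_nat (1 + ‖x‖)
      simpa using hsub.add h2
    have : d ≤ 0 := ge_of_tendsto htoz hfin
    linarith
  · rw [← hdzero] at htend
    exact htend

/-- Existence of a fixed point from a bounded subsequence of an asymptotically
regular orbit (asymptotic center argument). -/
lemma chat_exists_fixed [CompleteSpace X] [UniformConvexSpace X]
    (hclosed : IsClosed C) (hconv : Convex ℝ C) (hT : Set.MapsTo T C C)
    (hchat : ∀ x ∈ C, ∀ y ∈ C, ‖T x - T y‖ ≤ (1 / 2) * (‖T x - y‖ + ‖T y - x‖))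
    {x : X} (hx : x ∈ C)
    (hd : Filter.Tendsto (fun n : ℕ => ‖T^[n + 1] x - T^[n] x‖) Filter.atTop (nhds 0))
    {R : ℝ} (hb : ∃ᶠ n in Filter.atTop, ‖T^[n] x‖ ≤ R) :
    ∃ z ∈ C, T z = z := by
  classical
  obtain ⟨φ, hφ, hφR⟩ := Filter.extraction_of_frequently_atTop hb
  set c : ℕ → X := fun j => T^[φ j] x with hc
  have hcC : ∀ j, c j ∈ C := fun j => hT.iterate _ hx
  have hcb : ∀ j, ‖c j‖ ≤ R := hφR
  have hcd : Tendsto (fun j => ‖T (c j) - c j‖) atTop (𝓝 0) := by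
    have h1 : (fun j => ‖T (c j) - c j‖)
        = (fun n => ‖T^[n + 1] x - T^[n] x‖) ∘ φ := by
      funext j
      simp only [Function.comp_apply, hc]
      rw [← Function.iterate_succ_apply' T (φ j) x]
    rw [h1]
    exact hd.comp hφ.tendsto_atTop
  set A : X → ℝ := fun y => limsup (fun j => ‖c j - y‖) atTop with hA
  have hAbd : ∀ y : X, IsBoundedUnder (· ≤ ·) atTop (fun j => ‖c j - y‖) := fun y =>
    isBoundedUnder_of ⟨R + ‖y‖, fun j => (norm_sub_le _ _).trans (by gcongr; exact hcb j)⟩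
  have hAbd0 : ∀ y : X, IsBoundedUnder (· ≥ ·) atTop (fun j => ‖c j - y‖) := fun y =>
    isBoundedUnder_of ⟨0, fun j => norm_nonneg _⟩
  have hAcob : ∀ y : X, IsCoboundedUnder (· ≤ ·) atTop (fun j => ‖c j - y‖) := fun y =>
    (hAbd0 y).isCoboundedUnder_le
  have hA0 : ∀ y : X, 0 ≤ A y := fun y =>
    le_limsup_of_frequently_le (Frequently.of_forall fun j => norm_nonneg _) (hAbd y)
  have hAle : ∀ y z : X, A y ≤ A z + ‖z - y‖ := by
    intro y z
    have h1 : A y ≤ limsup ((fun j => ‖c j - z‖) + fun _ => ‖z - y‖) atTop := by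
      refine limsup_le_limsup (Filter.Eventually.of_forall fun j => ?_) (hAcob y)
        (isBoundedUnder_le_add (hAbd z) (isBoundedUnder_of ⟨‖z - y‖, fun _ => le_rfl⟩))
      simpa using norm_sub_le_norm_sub_add_norm_sub (c j) z y
    refine h1.trans ?_
    have h2 := limsup_add_le (f := atTop) (u := fun j => ‖c j - z‖)
      (v := fun _ : ℕ => ‖z - y‖) (hAbd0 z) (hAbd z)
      (isBoundedUnder_of (r := (· ≥ ·)) ⟨‖z - y‖, fun _ => le_rfl⟩).isCoboundedUnder_le
      (isBoundedUnder_of ⟨‖z - y‖, fun _ => le_rfl⟩)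
    simpa [limsup_const] using h2
  have hdist : ∀ y z : X, ‖y - z‖ ≤ A y + A z := by
    intro y z
    have h1 : ‖y - z‖ ≤ limsup ((fun j => ‖c j - y‖) + fun j => ‖c j - z‖) atTop := by
      apply le_limsup_of_frequently_le (Frequently.of_forall fun j => ?_)
        (isBoundedUnder_le_add (hAbd y) (hAbd z))
      calc ‖y - z‖ ≤ ‖y - c j‖ + ‖c j - z‖ := norm_sub_le_norm_sub_add_norm_sub _ _ _
        _ = ‖c j - y‖ + ‖c j - z‖ := by rw [norm_sub_rev]
    exact h1.trans (limsup_add_le (hAbd0 y) (hAbd y) (hAcob z) (hAbd z))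
  set r : ℝ := sInf (A '' C) with hr
  have hrne : (A '' C).Nonempty := ⟨A x, x, hx, rfl⟩
  have hrbd : BddBelow (A '' C) := ⟨0, by rintro _ ⟨y, _, rfl⟩; exact hA0 y⟩
  have hrle : ∀ y ∈ C, r ≤ A y := fun y hy => csInf_le hrbd ⟨y, hy, rfl⟩
  have hr0 : 0 ≤ r := le_csInf hrne (by rintro _ ⟨y, _, rfl⟩; exact hA0 y)
  have claim : ∀ ε : ℝ, 0 < ε → ∃ η > 0, ∀ p ∈ C, ∀ q ∈ C,
      A p < r + η → A q < r + η → ‖p - q‖ < ε := by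
    intro ε hε
    rcases hr0.lt_or_eq with hrpos | hrzero
    · obtain ⟨δ₀, hδ₀, huc⟩ := chat_uc_scaled (X := X) (ε := ε / (r + 1))
        (div_pos hε (by linarith))
      set δ : ℝ := min δ₀ 1 with hδdef
      have hδ : 0 < δ := lt_min hδ₀ one_pos
      have hδle : δ ≤ δ₀ := min_le_left _ _
      have hδ1 : δ ≤ 1 := min_le_right _ _
      set η : ℝ := min (δ * r / 8) (1 / 2) with hηdef
      have hη : 0 < η := lt_min (by positivity) one_half_pos
      have hη1 : η ≤ δ * r / 8 := min_le_left _ _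
      have hη2 : η ≤ 1 / 2 := min_le_right _ _
      refine ⟨η, hη, fun p hp q hq hAp hAq => ?_⟩
      by_contra hcon
      push_neg at hcon
      set w : X := (1 / 2 : ℝ) • p + (1 / 2 : ℝ) • q with hw
      have hwC : w ∈ C := hconv hp hq (by norm_num) (by norm_num) (by norm_num)
      have hRpos : (0 : ℝ) < r + 2 * η := by linarith
      have hev : ∀ᶠ j in atTop, ‖c j - p‖ < r + 2 * η ∧ ‖c j - q‖ < r + 2 * η := by
        filter_upwards [eventually_lt_of_limsup_lt
            (show A p < r + 2 * η by linarith) (hAbd p),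
          eventually_lt_of_limsup_lt (show A q < r + 2 * η by linarith) (hAbd q)]
          with j h1 h2
        exact ⟨h1, h2⟩
      have hAw : A w ≤ (1 - δ / 2) * (r + 2 * η) := by
        apply limsup_le_of_le (hAcob w)
        filter_upwards [hev] with j ⟨h1, h2⟩
        have hsub : ε / (r + 1) * (r + 2 * η) ≤ ‖(c j - p) - (c j - q)‖ := by
          have e : (c j - p) - (c j - q) = q - p := by abel
          rw [e, norm_sub_rev]
          have : ε / (r + 1) * (r + 2 * η) ≤ ε := by
            rw [div_mul_eq_mul_div, div_le_iff₀ (by linarith)]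
            nlinarith
          linarith
        have h3 := huc (r + 2 * η) hRpos (c j - p) (c j - q) h1.le h2.le hsub
        have e : c j - w = (1 / 2 : ℝ) • ((c j - p) + (c j - q)) := by
          rw [hw]; module
        rw [e, norm_smul]
        have h4 : ‖(c j - p) + (c j - q)‖ ≤ (2 - δ) * (r + 2 * η) := by
          refine h3.trans ?_
          nlinarith
        rw [Real.norm_eq_abs, abs_of_pos (by norm_num : (0:ℝ) < 1/2)]
        nlinarith [norm_nonneg ((c j - p) + (c j - q))]
      have hcontra : (1 - δ / 2) * (r + 2 * η) < r := by nlinarith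
      have := hrle w hwC
      linarith [hAw]
    · refine ⟨ε / 2, by positivity, fun p hp q hq hAp hAq => ?_⟩
      have := hdist p q
      rw [← hrzero] at hAp hAq
      linarith
  have hms : ∀ m : ℕ, ∃ y, y ∈ C ∧ A y < r + 1 / (m + 1) := by
    intro m
    have hlt : r < r + 1 / (m + 1 : ℝ) := by
      have : (0 : ℝ) < 1 / (m + 1 : ℝ) := by positivity
      linarith
    obtain ⟨a, ⟨y, hy, rfl⟩, ha⟩ := exists_lt_of_csInf_lt hrne hlt
    exact ⟨y, hy, ha⟩
  choose y hyC hyA using hms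
  have hcauchy : CauchySeq y := by
    rw [Metric.cauchySeq_iff]
    intro ε hε
    obtain ⟨η, hη, hcl⟩ := claim ε hε
    obtain ⟨N, hN⟩ := exists_nat_one_div_lt hη
    refine ⟨N, fun m hm m' hm' => ?_⟩
    rw [dist_eq_norm]
    have hle : ∀ k : ℕ, N ≤ k → A (y k) < r + η := by
      intro k hk
      refine (hyA k).trans_le ?_
      have h1 : 1 / (k + 1 : ℝ) ≤ 1 / (N + 1 : ℝ) := by
        apply one_div_le_one_div_of_le (by positivity)
        exact_mod_cast Nat.succ_le_succ hk
      linarith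
    exact hcl _ (hyC m) _ (hyC m') (hle m hm) (hle m' hm')
  obtain ⟨z, hz⟩ := cauchySeq_tendsto_of_complete hcauchy
  have hzC : z ∈ C := hclosed.mem_of_tendsto hz (Filter.Eventually.of_forall hyC)
  have hyAr : Tendsto (fun m => A (y m)) atTop (𝓝 r) := by
    apply tendsto_of_tendsto_of_tendsto_of_le_of_le (g := fun _ : ℕ => r)
      (h := fun m : ℕ => r + 1 / (m + 1)) tendsto_const_nhds
    · simpa using tendsto_const_nhds.add (tendsto_one_div_add_atTop_nhds_zero_nat :
        Tendsto (fun n : ℕ => 1 / ((n : ℝ) + 1)) atTop (𝓝 0))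
    · exact fun m => hrle _ (hyC m)
    · exact fun m => (hyA m).le
  have hAz_le : A z ≤ r := by
    have h2 : Tendsto (fun m => A (y m) + ‖y m - z‖) atTop (𝓝 (r + 0)) :=
      hyAr.add (tendsto_iff_norm_sub_tendsto_zero.1 hz)
    have h3 := ge_of_tendsto h2 (Filter.Eventually.of_forall fun m => hAle z (y m))
    simpa using h3
  have hAz : A z = r := le_antisymm hAz_le (hrle z hzC)
  have hTzC : T z ∈ C := hT hzC
  have hATz : A (T z) ≤ A z := by
    have hpt : ∀ j, ‖c j - T z‖ ≤ ‖c j - z‖ + 3 * ‖T (c j) - c j‖ := by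
      intro j
      have h1 := hchat _ (hcC j) _ hzC
      have h2 : ‖c j - T z‖ ≤ ‖c j - T (c j)‖ + ‖T (c j) - T z‖ :=
        norm_sub_le_norm_sub_add_norm_sub _ _ _
      have h3 : ‖T (c j) - z‖ ≤ ‖T (c j) - c j‖ + ‖c j - z‖ :=
        norm_sub_le_norm_sub_add_norm_sub _ _ _
      have h4 : ‖T z - c j‖ = ‖c j - T z‖ := norm_sub_rev _ _
      have h5 : ‖c j - T (c j)‖ = ‖T (c j) - c j‖ := norm_sub_rev _ _
      rw [h4] at h1
      rw [h5] at h2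
      linarith
    have h1 : A (T z) ≤ limsup ((fun j => ‖c j - z‖) + fun j => 3 * ‖T (c j) - c j‖)
        atTop := by
      refine limsup_le_limsup (Filter.Eventually.of_forall fun j => ?_) (hAcob (T z))
        (isBoundedUnder_le_add (hAbd z) (hcd.const_mul 3).isBoundedUnder_le)
      simpa using hpt j
    refine h1.trans ?_
    have h2 := limsup_add_le (f := atTop) (u := fun j => ‖c j - z‖)
      (v := fun j => 3 * ‖T (c j) - c j‖) (hAbd0 z) (hAbd z)
      (isBoundedUnder_of (r := (· ≥ ·)) ⟨0, fun j => by positivity⟩ :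
        IsBoundedUnder (· ≥ ·) atTop fun j => 3 * ‖T (c j) - c j‖).isCoboundedUnder_le
      (hcd.const_mul 3).isBoundedUnder_le
    have h3 : limsup (fun j => 3 * ‖T (c j) - c j‖) atTop = 0 := by
      have h4 : Tendsto (fun j => 3 * ‖T (c j) - c j‖) atTop (𝓝 (3 * 0)) := hcd.const_mul 3
      rw [mul_zero] at h4
      exact h4.limsup_eq
    calc limsup ((fun j => ‖c j - z‖) + fun j => 3 * ‖T (c j) - c j‖) atTop
        ≤ A z + limsup (fun j => 3 * ‖T (c j) - c j‖) atTop := h2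
      _ = A z := by rw [h3, add_zero]
  have hATzr : A (T z) = r := le_antisymm (hATz.trans hAz.le) (hrle _ hTzC)
  have hsmall : ∀ ε : ℝ, 0 < ε → ‖z - T z‖ < ε := by
    intro ε hε
    obtain ⟨η, hη, hcl⟩ := claim ε hε
    exact hcl z hzC (T z) hTzC (by rw [hAz]; linarith) (by rw [hATzr]; linarith)
  have hzero : ‖z - T z‖ = 0 := by
    by_contra hne
    have hpos : 0 < ‖z - T z‖ := lt_of_le_of_ne (norm_nonneg _) (Ne.symm hne)
    exact absurd (hsmall _ hpos) (lt_irrefl _)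
  refine ⟨z, hzC, ?_⟩
  exact (sub_eq_zero.1 (norm_eq_zero.1 hzero)).symm

end ChatterjeaAux

/-- For a Chatterjea mapping on a nonempty closed convex subset of a
uniformly convex real Banach space satisfying (H1) and (H2), `0` belongs to the closure
of `R(I - T)` but not to `R(I - T)` itself iff every orbit escapes to infinity in norm
while growing sublinearly. -/
theorem zero_mem_closure_not_range_iff
    {X : Type*} [NormedAddCommGroup X] [NormedSpace ℝ X] [CompleteSpace X]
    [UniformConvexSpace X]
    (C : Set X) (hne : C.Nonempty) (hclosed : IsClosed C) (hconv : Convex ℝ C)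
    (T : X → X) (hT : Set.MapsTo T C C)
    (hchat : ∀ x ∈ C, ∀ y ∈ C,
      ‖T x - T y‖ ≤ (1 / 2) * (‖T x - y‖ + ‖T y - x‖))
    (hH1 : ∀ x ∈ C, ∀ k : ℕ, 2 ≤ k →
      Antitone fun n : ℕ => ‖T^[n + k] x - T^[n] x‖)
    (hH2 : ∃ k₀ : ℕ, 1 ≤ k₀ ∧ ∃ M : ℝ, ∀ n : ℕ, k₀ ≤ n →
      ∀ x ∈ C, ∀ y ∈ C, ‖T^[n] x - T^[n] y‖ ≤ M * ‖x - y‖) :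
    ((0 : X) ∈ closure {y : X | ∃ x ∈ C, y = x - T x} ∧
        (0 : X) ∉ {y : X | ∃ x ∈ C, y = x - T x}) ↔
      ∀ x ∈ C,
        Filter.Tendsto (fun n : ℕ => ‖T^[n] x‖) Filter.atTop Filter.atTop ∧
        Filter.Tendsto (fun n : ℕ => ‖T^[n] x‖ / n) Filter.atTop (nhds 0) := by
  constructor
  · rintro ⟨hcl, hnot⟩ x hx
    obtain ⟨k₀, hk₀, M, hM⟩ := hH2
    have hsub : Filter.Tendsto (fun n : ℕ => ‖T^[n] x‖ / n) Filter.atTop (nhds 0) := by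
      rw [Metric.tendsto_atTop]
      intro ε hε
      rw [Metric.mem_closure_iff] at hcl
      obtain ⟨s, hsS, hds⟩ := hcl (ε / 2) (by positivity)
      obtain ⟨y, hyC, rfl⟩ := hsS
      rw [dist_comm, dist_zero_right] at hds
      have hTy : ‖T y - y‖ < ε / 2 := by rw [norm_sub_rev]; exact hds
      set B : ℝ := M * ‖x - y‖ + ‖y‖ with hB
      have hbound : ∀ n : ℕ, k₀ ≤ n → ‖T^[n] x‖ ≤ B + n * ‖T y - y‖ := by
        intro n hn
        have h1 : ‖T^[n] x‖ ≤ ‖T^[n] x - T^[n] y‖ + ‖T^[n] y - y‖ + ‖y‖ := by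
          have t1 : ‖T^[n] x‖ ≤ ‖T^[n] y‖ + ‖T^[n] x - T^[n] y‖ :=
            norm_le_insert' (T^[n] x) (T^[n] y)
          have t2 : ‖T^[n] y‖ ≤ ‖y‖ + ‖T^[n] y - y‖ := norm_le_insert' (T^[n] y) y
          linarith
        have h2 := hM n hn x hx y hyC
        have h3 := chat_telescope hT hchat hyC n
        linarith
      have hBtend : Filter.Tendsto (fun n : ℕ => |B| / n) Filter.atTop (nhds 0) :=
        tendsto_const_div_atTop_nhds_zero_nat _
      obtain ⟨N₂, hN₂⟩ := (Metric.tendsto_atTop.1 hBtend) (ε / 2) (by positivity)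
      refine ⟨max (max k₀ N₂) 1, fun n hn => ?_⟩
      have hnk : k₀ ≤ n := le_trans (le_trans (le_max_left _ _) (le_max_left _ _)) hn
      have hnN : N₂ ≤ n := le_trans (le_trans (le_max_right _ _) (le_max_left _ _)) hn
      have hn1 : 1 ≤ n := le_trans (le_max_right _ _) hn
      have hnpos : (0 : ℝ) < (n : ℝ) := by exact_mod_cast hn1
      rw [Real.dist_eq, sub_zero, abs_of_nonneg (by positivity)]
      have hBn : |B| / n < ε / 2 := by
        have := hN₂ n hnN
        rw [Real.dist_eq, sub_zero, abs_of_nonneg (by positivity)] at this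
        exact this
      have step1 : ‖T^[n] x‖ / n ≤ (B + n * ‖T y - y‖) / n := by
        gcongr
        exact hbound n hnk
      have step2 : (B + n * ‖T y - y‖) / n = B / n + ‖T y - y‖ := by
        rw [add_div]
        congr 1
        rw [mul_comm, mul_div_assoc, div_self (ne_of_gt hnpos), mul_one]
      have step3 : B / n ≤ |B| / n := by gcongr; exact le_abs_self B
      calc ‖T^[n] x‖ / n ≤ B / n + ‖T y - y‖ := by rw [← step2]; exact step1
        _ ≤ |B| / n + ‖T y - y‖ := by linarith
        _ < ε / 2 + ε / 2 := by linarith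
        _ = ε := by ring
    refine ⟨?_, hsub⟩
    by_contra hcon
    have hfreq : ∃ R : ℝ, ∃ᶠ n in Filter.atTop, ‖T^[n] x‖ ≤ R := by
      rw [Filter.tendsto_atTop] at hcon
      push_neg at hcon
      obtain ⟨R, hR⟩ := hcon
      exact ⟨R, hR.mono fun n hn => hn.le⟩
    obtain ⟨R, hR⟩ := hfreq
    have hd := chat_defect_tendsto_zero hT hchat hH1 hx hsub
    obtain ⟨z, hzC, hz⟩ := chat_exists_fixed hclosed hconv hT hchat hx hd hR
    exact hnot ⟨z, hzC, by rw [hz, sub_self]⟩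
  · intro h
    have h0 : ∀ x ∈ C,
        Filter.Tendsto (fun n : ℕ => ‖T^[n + 1] x - T^[n] x‖) Filter.atTop (nhds 0) :=
      fun x hx => chat_defect_tendsto_zero hT hchat hH1 hx (h x hx).2
    constructor
    · obtain ⟨x₀, hx₀⟩ := hne
      have hd := h0 x₀ hx₀
      apply mem_closure_of_tendsto (f := fun n : ℕ => T^[n] x₀ - T^[n + 1] x₀)
        (b := Filter.atTop)
      · rw [tendsto_zero_iff_norm_tendsto_zero]
        have e : (fun n : ℕ => ‖T^[n] x₀ - T^[n + 1] x₀‖)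
            = fun n : ℕ => ‖T^[n + 1] x₀ - T^[n] x₀‖ := by
          funext n; rw [norm_sub_rev]
        rw [e]
        exact hd
      · refine Filter.Eventually.of_forall fun n => ?_
        exact ⟨T^[n] x₀, hT.iterate n hx₀, by
          rw [Function.iterate_succ_apply' T n x₀]⟩
    · rintro ⟨z, hzC, hz0⟩
      have hfix : T z = z := by
        have h1 : z - T z = 0 := hz0.symm
        have := sub_eq_zero.1 h1
        exact this.symm
      have hiter : ∀ n : ℕ, T^[n] z = z := Function.iterate_fixed hfix
      have h1 := (h z hzC).1
      have h2 : Filter.Tendsto (fun _ : ℕ => ‖z‖) Filter.atTop Filter.atTop := by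
        have e : (fun n : ℕ => ‖T^[n] z‖) = fun _ : ℕ => ‖z‖ := by
          funext n; rw [hiter n]
        rwa [e] at h1
      exact absurd h2 (not_tendsto_atTop_of_tendsto_nhds tendsto_const_nhds)
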